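/- arXiv:1809.00611 — 3 statements merged into one kernel-verified Lean document; each statement's English description precedes it below -/
import Mathlib

section
/- Let A : ℝ → Matrix n n ℂ be a differentiable family of Hermitian matrices. Then for every t, the function t ↦ tr(exp(A t)) is differentiable and its derivative is d/dt tr(exp(A t)) = tr(exp(A t) · A'(t)), where A'(t) is the derivative of A at t. -/
open scoped ComplexOrder

attribute [local instance] Matrix.normedAddCommGroup Matrix.normedSpace

/-- The matrix exponential of an `n × n` complex matrix. -/
noncomputable def matExp {n : ℕ} (A : Matrix (Fin n) (Fin n) ℂ) : Matrix (Fin n) (Fin n) ℂ :=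
  NormedSpace.exp A

/-- The matrix logarithm, given by the continuous functional calculus (the real
logarithm applied to the eigenvalues of a Hermitian matrix). -/
noncomputable def matLog {n : ℕ} (A : Matrix (Fin n) (Fin n) ℂ) : Matrix (Fin n) (Fin n) ℂ :=
  cfc Real.log A

/-- The von Neumann entropy `S(ρ) = −Re tr(ρ log ρ)`. -/
noncomputable def vnEntropy {n : ℕ} (ρ : Matrix (Fin n) (Fin n) ℂ) : ℝ :=
  -(Matrix.trace (ρ * matLog ρ)).re

/-- The relative entropy `S(ρ‖σ) = Re tr(ρ log ρ) − Re tr(ρ log σ)`. -/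
noncomputable def relEntropy {n : ℕ} (ρ σ : Matrix (Fin n) (Fin n) ℂ) : ℝ :=
  (Matrix.trace (ρ * matLog ρ)).re - (Matrix.trace (ρ * matLog σ)).re

/-- The partition function `Z = Re tr(exp(−βH))`. -/
noncomputable def partZ {n : ℕ} (β : ℝ) (H : Matrix (Fin n) (Fin n) ℂ) : ℝ :=
  (Matrix.trace (matExp ((-β) • H))).re

/-- The Gibbs state `ρ^β = exp(−βH)/Z`. -/
noncomputable def gibbs {n : ℕ} (β : ℝ) (H : Matrix (Fin n) (Fin n) ℂ) :
    Matrix (Fin n) (Fin n) ℂ :=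
  (partZ β H)⁻¹ • matExp ((-β) • H)

namespace TraceExpAux

@[reducible] noncomputable def clmNAG (F : Type) [NormedAddCommGroup F] [NormedSpace ℂ F] :
    NormedAddCommGroup (Matrix (Fin N) (Fin N) ℂ →L[ℂ] F) :=
  ContinuousLinearMap.toNormedAddCommGroup (E := Matrix (Fin N) (Fin N) ℂ) (F := F) (𝕜 := ℂ)
    (𝕜₂ := ℂ) (σ₁₂ := RingHom.id ℂ)

@[reducible] noncomputable def clmNS (F : Type) [NormedAddCommGroup F] [NormedSpace ℂ F] :
    @NormedSpace ℂ (Matrix (Fin N) (Fin N) ℂ →L[ℂ] F) _ (clmNAG F).toSeminormedAddCommGroup :=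
  ContinuousLinearMap.toNormedSpace (E := Matrix (Fin N) (Fin N) ℂ) (F := F) (𝕜 := ℂ)
    (𝕜₂ := ℂ) (σ₁₂ := RingHom.id ℂ)

@[reducible] noncomputable def clmCS (F : Type) [NormedAddCommGroup F] [NormedSpace ℂ F]
    [CompleteSpace F] :
    @CompleteSpace (Matrix (Fin N) (Fin N) ℂ →L[ℂ] F) (clmNAG F).toUniformSpace :=
  haveI : SequentialSpace (Matrix (Fin N) (Fin N) ℂ) :=
    inferInstanceAs (SequentialSpace (Fin N → Fin N → ℂ))
  ContinuousLinearMap.instCompleteSpace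

@[reducible] noncomputable def clmNAGM :
    NormedAddCommGroup (Matrix (Fin N) (Fin N) ℂ →L[ℂ] Matrix (Fin N) (Fin N) ℂ) :=
  clmNAG _

@[reducible] noncomputable def clmNSM :
    @NormedSpace ℂ (Matrix (Fin N) (Fin N) ℂ →L[ℂ] Matrix (Fin N) (Fin N) ℂ) _
      (clmNAGM (N := N)).toSeminormedAddCommGroup :=
  clmNS _

attribute [local instance] clmNAG clmNS clmCS clmNAGM clmNSM

@[reducible] noncomputable def clmNAGMM :
    NormedAddCommGroup (Matrix (Fin N) (Fin N) ℂ →L[ℂ]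
      Matrix (Fin N) (Fin N) ℂ →L[ℂ] Matrix (Fin N) (Fin N) ℂ) :=
  clmNAG _

attribute [local instance] clmNAGMM

variable {N : ℕ}

local notation "M" => Matrix (Fin N) (Fin N) ℂ

noncomputable def traceCLM : M →L[ℂ] ℂ :=
  LinearMap.toContinuousLinearMap (Matrix.traceLinearMap (Fin N) ℂ ℂ)

@[simp] lemma traceCLM_apply (X : M) : traceCLM X = Matrix.trace X := rfl

noncomputable def lmul (X : M) : M →L[ℂ] M :=
  LinearMap.toContinuousLinearMap (LinearMap.mulLeft ℂ X)

@[simp] lemma lmul_apply (X H : M) : lmul X H = X * H := rfl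

noncomputable def mulL : M →L[ℂ] M →L[ℂ] M :=
  LinearMap.toContinuousLinearMap
    { toFun := fun X => lmul X
      map_add' := by intro X Y; ext H; simp [mul_add, add_mul]
      map_smul' := by intro c X; ext H; simp [smul_mul_assoc] }

@[simp] lemma mulL_apply (X H : M) : mulL X H = X * H := rfl

lemma norm_one_le : ‖(1 : M)‖ ≤ 1 := by
  rw [Matrix.norm_le_iff zero_le_one]
  intro i j
  by_cases h : i = j <;> simp [Matrix.one_apply, h]

lemma norm_mul_le' (X Y : M) : ‖X * Y‖ ≤ N * ‖X‖ * ‖Y‖ := by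
  have h0 : (0:ℝ) ≤ N * ‖X‖ * ‖Y‖ := by positivity
  rw [Matrix.norm_le_iff h0]
  intro i j
  calc ‖(X * Y) i j‖ = ‖∑ k, X i k * Y k j‖ := by rw [Matrix.mul_apply]
    _ ≤ ∑ k : Fin N, ‖X i k * Y k j‖ := norm_sum_le _ _
    _ ≤ ∑ _k : Fin N, ‖X‖ * ‖Y‖ := by
        refine Finset.sum_le_sum fun k _ => ?_
        rw [norm_mul]
        exact mul_le_mul (Matrix.norm_entry_le_entrywise_sup_norm X)
          (Matrix.norm_entry_le_entrywise_sup_norm Y) (norm_nonneg _) (norm_nonneg _)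
    _ = N * ‖X‖ * ‖Y‖ := by simp [mul_assoc]

lemma norm_pow_le (X : M) (k : ℕ) : ‖X ^ k‖ ≤ (N * ‖X‖) ^ k := by
  induction k with
  | zero => simpa using norm_one_le
  | succ k ih =>
      calc ‖X ^ (k+1)‖ = ‖X ^ k * X‖ := by rw [pow_succ]
        _ ≤ N * ‖X ^ k‖ * ‖X‖ := norm_mul_le' _ _
        _ ≤ N * (N * ‖X‖) ^ k * ‖X‖ := by
            have hN : (0:ℝ) ≤ N := by positivity
            gcongr
        _ = (N * ‖X‖) ^ (k+1) := by ring

lemma norm_trace_le (X : M) : ‖Matrix.trace X‖ ≤ N * ‖X‖ := by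
  calc ‖Matrix.trace X‖ = ‖∑ i, X i i‖ := rfl
    _ ≤ ∑ _i : Fin N, ‖X‖ := (norm_sum_le _ _).trans (Finset.sum_le_sum fun i _ =>
        Matrix.norm_entry_le_entrywise_sup_norm X)
    _ = N * ‖X‖ := by simp

lemma expSummable (Y : M) : Summable (fun k : ℕ => ((k.factorial : ℂ))⁻¹ • Y ^ k) := by
  refine Summable.of_norm (Summable.of_nonneg_of_le (fun k => norm_nonneg _)
    (fun k => ?_) (Real.summable_pow_div_factorial (N * ‖Y‖)))
  rw [norm_smul]
  have h1 : ‖((k.factorial : ℂ))⁻¹‖ = (k.factorial : ℝ)⁻¹ := by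
    rw [norm_inv]; norm_num
  rw [h1]
  have h2 : (k.factorial : ℝ)⁻¹ * ‖Y ^ k‖ ≤ (k.factorial : ℝ)⁻¹ * (N * ‖Y‖) ^ k :=
    mul_le_mul_of_nonneg_left (norm_pow_le Y k) (by positivity)
  exact h2.trans_eq (by rw [inv_mul_eq_div])

lemma matExp_eq_tsum (Y : M) : NormedSpace.exp Y = ∑' k : ℕ, ((k.factorial : ℂ))⁻¹ • Y ^ k := by
  rw [NormedSpace.exp_eq_tsum (𝕂 := ℂ)]

noncomputable def rmul (X : M) : M →L[ℂ] M :=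
  LinearMap.toContinuousLinearMap (LinearMap.mulRight ℂ X)

@[simp] lemma rmul_apply (X H : M) : rmul X H = H * X := rfl

noncomputable def powD (k : ℕ) (X : M) : M →L[ℂ] M :=
  ∑ i ∈ Finset.range k, (rmul (X ^ (k - 1 - i))).comp (lmul (X ^ i))

lemma powD_apply (k : ℕ) (X H : M) :
    powD k X H = ∑ i ∈ Finset.range k, X ^ i * H * X ^ (k - 1 - i) := by
  simp [powD, ContinuousLinearMap.sum_apply, mul_assoc]

lemma hasFDerivAt_pow (k : ℕ) (X : M) :
    HasFDerivAt (fun Y : M => Y ^ k) (powD k X) X := by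
  induction k with
  | zero =>
      simp only [pow_zero, powD, Finset.range_zero, Finset.sum_empty]
      exact hasFDerivAt_const _ _
  | succ k ih =>
      have hc : HasFDerivAt (fun Y : M => mulL (Y ^ k)) (mulL.comp (powD k X)) X :=
        by
          have t1 : HasFDerivAt (⇑mulL) mulL (X ^ k) := mulL.hasFDerivAt
          exact HasFDerivAt.comp (g := ⇑mulL) (g' := mulL) (x := X) (hg := t1) (hf := ih)
      have hu : HasFDerivAt (fun Y : M => Y) (ContinuousLinearMap.id ℂ M) X :=
        hasFDerivAt_id X
      have h := hc.clm_apply hu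
      have hfun : (fun Y : M => mulL (Y ^ k) Y) = fun Y : M => Y ^ (k + 1) := by
        funext Y; simp [pow_succ]
      replace h := h.congr_of_eventuallyEq
        (Filter.Eventually.of_forall fun Y => (congrFun hfun Y).symm)
      refine h.congr_fderiv (Eq.symm ?_)
      ext H : 1
      show powD (k+1) X H = mulL (X ^ k) H + mulL (powD k X H) X
      simp only [ContinuousLinearMap.add_apply, ContinuousLinearMap.comp_apply,
        ContinuousLinearMap.coe_id', id_eq, ContinuousLinearMap.flip_apply,
        mulL_apply, powD_apply]
      rw [Finset.sum_range_succ]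
      have h1 : k + 1 - 1 - k = 0 := by omega
      have h2 : ∀ i ∈ Finset.range k,
          X ^ i * H * X ^ (k + 1 - 1 - i) = (X ^ i * H * X ^ (k - 1 - i)) * X := by
        intro i hi
        rw [Finset.mem_range] at hi
        have : k + 1 - 1 - i = (k - 1 - i) + 1 := by omega
        rw [this, pow_succ, ← mul_assoc]
      rw [Finset.sum_congr rfl h2, h1, pow_zero, mul_one, ← Finset.sum_mul]
      rw [add_comm]

noncomputable def f (k : ℕ) (Y : M) : ℂ := (k.factorial : ℂ)⁻¹ • Matrix.trace (Y ^ k)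

noncomputable def Fd : ℕ → M → (M →L[ℂ] ℂ)
  | 0, _ => 0
  | (k+1), X => (k.factorial : ℂ)⁻¹ • (traceCLM.comp (lmul (X ^ k)))

lemma Fd_succ_apply (k : ℕ) (X H : M) :
    Fd (k+1) X H = (k.factorial : ℂ)⁻¹ • Matrix.trace (X ^ k * H) := rfl

lemma hasFDerivAt_f (k : ℕ) (X : M) : HasFDerivAt (f k) (Fd k X) X := by
  cases k with
  | zero =>
      have : f 0 = fun _ : M => ((1 : ℕ).factorial : ℂ)⁻¹ • Matrix.trace (1 : M) := by
        funext Y; simp [f]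
      rw [this, Fd]
      exact hasFDerivAt_const _ _
  | succ k =>
      have h : HasFDerivAt (fun Y : M => Matrix.trace (Y ^ (k+1)))
          (traceCLM.comp (powD (k+1) X)) X := by
        exact (traceCLM.hasFDerivAt.comp X (hasFDerivAt_pow (k+1) X) :)
      have h2 := h.const_smul (((k+1).factorial : ℂ)⁻¹)
      have hfun : (fun Y : M => ((k+1).factorial : ℂ)⁻¹ • Matrix.trace (Y ^ (k+1)))
          = f (k+1) := rfl
      change HasFDerivAt (f (k+1)) _ X at h2
      refine h2.congr_fderiv (Eq.symm ?_)
      ext H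
      show _ = ((k+1).factorial : ℂ)⁻¹ • Matrix.trace (powD (k+1) X H)
      simp only [Fd_succ_apply, ContinuousLinearMap.smul_apply,
        ContinuousLinearMap.comp_apply, traceCLM_apply, powD_apply]
      have hterm : ∀ i ∈ Finset.range (k+1),
          Matrix.trace (X ^ i * H * X ^ (k + 1 - 1 - i)) = Matrix.trace (X ^ k * H) := by
        intro i hi
        rw [Finset.mem_range] at hi
        have he : k + 1 - 1 - i + i = k := by omega
        rw [Matrix.trace_mul_cycle, ← pow_add, he]
      rw [Matrix.trace_sum, Finset.sum_congr rfl hterm, Finset.sum_const,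
        Finset.card_range, nsmul_eq_mul]
      have hfac : (((k+1).factorial : ℂ)) = (k+1) * (k.factorial : ℂ) := by
        rw [Nat.factorial_succ]; push_cast; ring
      have hk1 : ((k:ℂ)+1) ≠ 0 := Nat.cast_add_one_ne_zero k
      have hkf : ((k.factorial : ℂ)) ≠ 0 := Nat.cast_ne_zero.mpr k.factorial_ne_zero
      rw [hfac, smul_eq_mul, smul_eq_mul]
      field_simp
      push_cast
      ring

lemma norm_Fd_succ_le (k : ℕ) (Y : M) :
    ‖Fd (k+1) Y‖ ≤ (N:ℝ)^2 * (N * ‖Y‖)^k / k.factorial := by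
  have h0 : (0:ℝ) ≤ (N:ℝ)^2 * (N * ‖Y‖)^k / k.factorial := by positivity
  refine ContinuousLinearMap.opNorm_le_bound _ h0 fun H => ?_
  show ‖((k.factorial : ℂ))⁻¹ • Matrix.trace (Y ^ k * H)‖ ≤ _
  rw [norm_smul]
  have h1 : ‖((k.factorial : ℂ))⁻¹‖ = (k.factorial : ℝ)⁻¹ := by rw [norm_inv]; norm_num
  rw [h1]
  have h2 : ‖Matrix.trace (Y ^ k * H)‖ ≤ (N:ℝ)^2 * (N * ‖Y‖)^k * ‖H‖ := by
    calc ‖Matrix.trace (Y ^ k * H)‖ ≤ N * ‖Y ^ k * H‖ := norm_trace_le _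
      _ ≤ N * (N * ‖Y ^ k‖ * ‖H‖) := by
          gcongr
          exact norm_mul_le' (Y ^ k) H
      _ ≤ N * (N * (N * ‖Y‖)^k * ‖H‖) := by
          gcongr
          exact norm_pow_le Y k
      _ = (N:ℝ)^2 * (N * ‖Y‖)^k * ‖H‖ := by ring
  calc (k.factorial : ℝ)⁻¹ * ‖Matrix.trace (Y ^ k * H)‖
      ≤ (k.factorial : ℝ)⁻¹ * ((N:ℝ)^2 * (N * ‖Y‖)^k * ‖H‖) := by
        apply mul_le_mul_of_nonneg_left h2 (by positivity)
    _ = (N:ℝ)^2 * (N * ‖Y‖)^k / k.factorial * ‖H‖ := by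
        rw [div_eq_inv_mul]; ring

lemma hasFDerivAt_traceExp (X : M) :
    HasFDerivAt (fun Y : M => Matrix.trace (NormedSpace.exp Y))
      (traceCLM.comp (lmul (NormedSpace.exp X))) X := by
  classical
  set R : ℝ := (N:ℝ) * (‖X‖ + 1) with hRdef
  have hR0 : (0:ℝ) ≤ R := by positivity
  set u : ℕ → ℝ := fun k => Nat.rec 0 (fun k _ => (N:ℝ)^2 * (R^k / k.factorial)) k with hudef
  have hu : Summable u := by
    have hs : Summable (fun k : ℕ => (N:ℝ)^2 * (R^k / k.factorial)) :=
      (Real.summable_pow_div_factorial R).mul_left _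
    exact (summable_nat_add_iff 1).mp hs
  have hball : ∀ Y : M, Y ∈ Metric.ball X 1 → (N:ℝ) * ‖Y‖ ≤ R := by
    intro Y hY
    rw [Metric.mem_ball, dist_eq_norm] at hY
    have h1 : ‖Y‖ ≤ ‖X‖ + 1 := by
      calc ‖Y‖ = ‖Y - X + X‖ := by rw [sub_add_cancel]
        _ ≤ ‖Y - X‖ + ‖X‖ := norm_add_le _ _
        _ ≤ ‖X‖ + 1 := by linarith
    have hN : (0:ℝ) ≤ N := by positivity
    calc (N:ℝ) * ‖Y‖ ≤ (N:ℝ) * (‖X‖ + 1) := by nlinarith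
      _ = R := rfl
  have hbound : ∀ (k : ℕ) (Y : M), Y ∈ Metric.ball X 1 → ‖Fd k Y‖ ≤ u k := by
    intro k Y hY
    cases k with
    | zero => simp [Fd, hudef]
    | succ k =>
        refine (norm_Fd_succ_le k Y).trans ?_
        have h1 : ((N:ℝ) * ‖Y‖)^k ≤ R^k :=
          pow_le_pow_left₀ (by positivity) (hball Y hY) k
        have : (N:ℝ)^2 * (N * ‖Y‖)^k / k.factorial ≤ (N:ℝ)^2 * R^k / k.factorial := by
          gcongr
        refine this.trans_eq ?_
        show (N:ℝ)^2 * R^k / k.factorial = u (k+1)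
        simp [hudef, mul_div_assoc]
  have hf0 : Summable (fun k => f k X) := by
    refine Summable.of_norm (Summable.of_nonneg_of_le (fun k => norm_nonneg _) (fun k => ?_)
      ((Real.summable_pow_div_factorial ((N:ℝ) * ‖X‖)).mul_left (N:ℝ)))
    rw [f, norm_smul]
    have h1 : ‖((k.factorial : ℂ))⁻¹‖ = (k.factorial : ℝ)⁻¹ := by rw [norm_inv]; norm_num
    rw [h1]
    calc (k.factorial : ℝ)⁻¹ * ‖Matrix.trace (X ^ k)‖
        ≤ (k.factorial : ℝ)⁻¹ * ((N:ℝ) * ((N:ℝ) * ‖X‖)^k) := by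
          refine mul_le_mul_of_nonneg_left ?_ (by positivity)
          exact (norm_trace_le _).trans (by
            have hN : (0:ℝ) ≤ N := by positivity
            nlinarith [norm_pow_le X k])
      _ = (N:ℝ) * (((N:ℝ) * ‖X‖)^k / k.factorial) := by
          rw [div_eq_inv_mul]; ring
  have hmain := hasFDerivAt_tsum_of_isPreconnected hu Metric.isOpen_ball
    (convex_ball X 1).isPreconnected (fun k Y hY => hasFDerivAt_f k Y)
    hbound (Metric.mem_ball_self one_pos) hf0 (Metric.mem_ball_self one_pos)
  have hFeq : (fun Y : M => ∑' k, f k Y) = fun Y : M => Matrix.trace (NormedSpace.exp Y) := by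
    funext Y
    rw [matExp_eq_tsum, ← traceCLM_apply,
      ContinuousLinearMap.map_tsum traceCLM (expSummable Y)]
    exact tsum_congr fun k => by simp [f]
  have hsum : Summable (fun k => Fd k X) :=
    Summable.of_norm_bounded hu (fun k => hbound k X (Metric.mem_ball_self one_pos))
  have hDeq : (∑' k, Fd k X) = traceCLM.comp (lmul (NormedSpace.exp X)) := by
    ext H
    have happ : (∑' k, Fd k X) H = ∑' k, Fd k X H :=
      ContinuousLinearMap.map_tsum (ContinuousLinearMap.apply ℂ ℂ H) hsum
    have hsum2 : Summable (fun k => Fd k X H) :=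
      (ContinuousLinearMap.apply ℂ ℂ H).summable hsum
    rw [happ, Summable.tsum_eq_zero_add hsum2]
    have h0 : Fd 0 X H = 0 := rfl
    rw [h0, zero_add]
    have hRHS : (traceCLM.comp (lmul (NormedSpace.exp X))) H
        = ∑' k, (k.factorial : ℂ)⁻¹ • Matrix.trace (X ^ k * H) := by
      show Matrix.trace (NormedSpace.exp X * H) = _
      have : Matrix.trace (NormedSpace.exp X * H)
          = (traceCLM.comp (rmul H)) (NormedSpace.exp X) := rfl
      rw [this, matExp_eq_tsum,
        ContinuousLinearMap.map_tsum (traceCLM.comp (rmul H)) (expSummable X)]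
      refine tsum_congr fun k => ?_
      simp [smul_mul_assoc]
    rw [hRHS]
    exact tsum_congr fun k => by rw [Fd_succ_apply]
  rw [hFeq] at hmain
  exact hmain.congr_fderiv hDeq

end TraceExpAux


/-- **Derivative of the trace of a matrix exponential.**
If `A : ℝ → Matrix n n ℂ` is a differentiable family of Hermitian matrices, then for
every `t` the function `t ↦ tr(exp(A t))` is differentiable with derivative
`tr(exp(A t) · A'(t))`, where `A'(t) = deriv A t`. -/
theorem hasDerivAt_trace_matExp {n : ℕ}
    (A : ℝ → Matrix (Fin n) (Fin n) ℂ) (hA : Differentiable ℝ A)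
    (hherm : ∀ t, (A t).IsHermitian) (t : ℝ) :
    HasDerivAt (fun s => Matrix.trace (matExp (A s)))
      (Matrix.trace (matExp (A t) * deriv A t)) t := by
  have hF := TraceExpAux.hasFDerivAt_traceExp (A t)
  have hA' : HasDerivAt A (deriv A t) t := (hA t).hasDerivAt
  exact (hF.restrictScalars ℝ).comp_hasDerivAt t hA'
end

section
/- Let β > 0, let H : ℝ → Matrix n n ℂ be a continuously differentiable family of Hermitian matrices, and let ρ : ℝ → Matrix n n ℂ be a continuous family of density matrices. For t ∈ ℝ, set Z_t = Re tr(exp(−β·H_t)), ρ^β_t = exp(−β·H_t)/Z_t, and F^β_t = −(1/β)·Real.log Z_t. Then for every τ ≥ 0, the work ΔW = ∫₀^τ Re tr(ρ_t · H'_t) dt satisfies ΔW = −(1/β)·∫₀^τ Re tr(ρ_t · (d/dt)(log ρ^β_t)) dt + (F^β_τ − F^β_0), where log ρ^β_t is given by continuous functional calculus. -/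
open scoped ComplexOrder


section PreAux

attribute [local instance] Matrix.linftyOpNormedRing Matrix.linftyOpNormedAlgebra

lemma aux_contDiff_re_trace_exp {n : ℕ} (β : ℝ) (H : ℝ → Matrix (Fin n) (Fin n) ℂ)
    (hH : ∀ i j, ContDiff ℝ 1 (fun t => H t i j)) :
    ContDiff ℝ 1 (fun t => (Matrix.trace (NormedSpace.exp ((-β) • H t))).re) := by
  have hmat : ContDiff ℝ 1 H := by
    have hrw : H = fun t => ∑ i : Fin n, ∑ j : Fin n,
        (H t i j) • Matrix.single i j (1 : ℂ) := by
      funext t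
      conv_lhs => rw [Matrix.matrix_eq_sum_single (H t)]
      simp [Matrix.smul_single]
    rw [hrw]
    apply ContDiff.sum; intro i _
    apply ContDiff.sum; intro j _
    exact (((ContinuousLinearMap.lsmul ℝ ℂ).flip
      (Matrix.single i j (1 : ℂ))).contDiff).comp (hH i j)
  have hexpC : ContDiff ℝ 1 (NormedSpace.exp :
      Matrix (Fin n) (Fin n) ℂ → Matrix (Fin n) (Fin n) ℂ) :=
    contDiff_iff_contDiffAt.mpr fun x => (NormedSpace.exp_analytic (𝕂 := ℝ) x).contDiffAt
  have hcomp : ContDiff ℝ 1 (fun t => NormedSpace.exp ((-β) • H t)) := by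
    exact hexpC.comp (hmat.const_smul (-β))
  have htr : ContDiff ℝ 1 (fun t => Matrix.trace (NormedSpace.exp ((-β) • H t))) :=
    (LinearMap.toContinuousLinearMap
      (Matrix.traceLinearMap (Fin n) ℝ ℂ)).contDiff.comp hcomp
  exact Complex.reCLM.contDiff.comp htr

end PreAux


attribute [local instance] Matrix.normedAddCommGroup Matrix.normedSpace

section Auxiliary

variable {n : ℕ}

lemma matExp_eq_cfc {A : Matrix (Fin n) (Fin n) ℂ} (hA : A.IsHermitian) :
    matExp A = cfc Real.exp A := by
  letI := Matrix.linftyOpNormedRing (n := Fin n) (α := ℂ)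
  letI := Matrix.linftyOpNormedAlgebra (n := Fin n) (R := ℝ) (α := ℂ)
  rw [matExp]
  exact (@CFC.real_exp_eq_normedSpace_exp _ Matrix.linftyOpNormedRing _
    Matrix.linftyOpNormedAlgebra Matrix.IsHermitian.instContinuousFunctionalCalculus A hA).symm

lemma matLog_smul_matExp {c : ℝ} (hc : 0 < c) {A : Matrix (Fin n) (Fin n) ℂ}
    (hA : A.IsHermitian) :
    matLog (c • matExp A) = Real.log c • (1 : Matrix (Fin n) (Fin n) ℂ) + A := by
  have hsa : IsSelfAdjoint A := hA
  rw [matLog, matExp_eq_cfc hA, ← cfc_smul c Real.exp A]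
  rw [← cfc_comp' Real.log (fun x => c • Real.exp x) A ?hg]
  case hg =>
    apply Real.continuousOn_log.mono
    rintro - ⟨x, -, rfl⟩
    simp only [Set.mem_compl_iff, Set.mem_singleton_iff, smul_eq_mul]
    positivity
  calc cfc (fun x => Real.log (c • Real.exp x)) A
      = cfc (fun x : ℝ => Real.log c + x) A := by
        apply cfc_congr; intro x _
        simp only [smul_eq_mul]
        rw [Real.log_mul hc.ne' (Real.exp_pos x).ne', Real.log_exp]
    _ = Real.log c • (1 : Matrix (Fin n) (Fin n) ℂ) + A := by
        rw [cfc_const_add _ _ A, cfc_id' ℝ A, Algebra.algebraMap_eq_smul_one]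

lemma isHermitian_realSmul {r : ℝ} {A : Matrix (Fin n) (Fin n) ℂ} (hA : A.IsHermitian) :
    (r • A).IsHermitian := by
  unfold Matrix.IsHermitian at *
  rw [Matrix.conjTranspose_smul, star_trivial, hA]

lemma trace_matExp {A : Matrix (Fin n) (Fin n) ℂ} (hA : A.IsHermitian) :
    Matrix.trace (matExp A) = ∑ i, (Real.exp (hA.eigenvalues i) : ℂ) := by
  rw [matExp_eq_cfc hA, hA.cfc_eq, Matrix.IsHermitian.cfc, Unitary.conjStarAlgAut_apply, Matrix.trace_mul_cycle,
    Unitary.coe_star_mul_self, one_mul, Matrix.trace_diagonal]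
  simp [Function.comp]

lemma partZ_pos (hn : 0 < n) (β : ℝ) {A : Matrix (Fin n) (Fin n) ℂ} (hA : A.IsHermitian) :
    0 < partZ β A := by
  have hB : ((-β) • A).IsHermitian := isHermitian_realSmul hA
  have h : partZ β A = ∑ i, Real.exp (hB.eigenvalues i) := by
    rw [partZ, trace_matExp hB, Complex.re_sum]
    simp only [Complex.ofReal_re]
  rw [h]
  have : Nonempty (Fin n) := Fin.pos_iff_nonempty.mp hn
  exact Finset.sum_pos (fun i _ => Real.exp_pos _) Finset.univ_nonempty

lemma matLog_gibbs (hn : 0 < n) (β : ℝ) {A : Matrix (Fin n) (Fin n) ℂ}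
    (hA : A.IsHermitian) :
    matLog (gibbs β A)
      = (-(Real.log (partZ β A))) • (1 : Matrix (Fin n) (Fin n) ℂ) + (-β) • A := by
  have hZ : 0 < partZ β A := partZ_pos hn β hA
  have hB : ((-β) • A).IsHermitian := isHermitian_realSmul hA
  rw [gibbs, matLog_smul_matExp (inv_pos.mpr hZ) hB, Real.log_inv]

lemma contDiff_entry {H : ℝ → Matrix (Fin n) (Fin n) ℂ} (hH : ContDiff ℝ 1 H) (i j : Fin n) :
    ContDiff ℝ 1 (fun t => H t i j) := by
  let L : Matrix (Fin n) (Fin n) ℂ →ₗ[ℝ] ℂ :=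
    { toFun := fun M => M i j, map_add' := fun _ _ => rfl, map_smul' := fun _ _ => rfl }
  exact (LinearMap.toContinuousLinearMap L).contDiff.comp hH

lemma contDiff_partZ (β : ℝ) {H : ℝ → Matrix (Fin n) (Fin n) ℂ}
    (hH : ∀ i j, ContDiff ℝ 1 (fun t => H t i j)) :
    ContDiff ℝ 1 (fun t => partZ β (H t)) := by
  simp only [partZ, matExp]
  exact aux_contDiff_re_trace_exp β H hH

end Auxiliary


/-- **Work in terms of the derivative of the log-Gibbs state (Eq. (6)).**
For `β > 0`, a continuously differentiable family of Hermitian Hamiltonians `H` and a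
continuous family of density matrices `ρ`, with `Z_t = Re tr(exp(−βH_t))`,
`ρ^β_t = exp(−βH_t)/Z_t` and `F^β_t = −(1/β)·log Z_t`, for every `τ ≥ 0`
`ΔW = ∫₀^τ Re tr(ρ_t H'_t) dt` equals
`−(1/β)·∫₀^τ Re tr(ρ_t · d/dt(log ρ^β_t)) dt + (F^β_τ − F^β_0)`. -/

theorem work_eq_log_gibbs_derivative_integral_add_free_energy {n : ℕ} (hn : 0 < n)
    (β : ℝ) (hβ : 0 < β) (H ρ : ℝ → Matrix (Fin n) (Fin n) ℂ)
    (hH : ContDiff ℝ 1 H) (hHherm : ∀ t, (H t).IsHermitian)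
    (hρc : Continuous ρ)
    (hρ : ∀ t, (ρ t).PosSemidef ∧ Matrix.trace (ρ t) = 1)
    (τ : ℝ) (hτ : 0 ≤ τ) :
    ∫ t in (0:ℝ)..τ, (Matrix.trace (ρ t * deriv H t)).re =
      -(1 / β) * (∫ t in (0:ℝ)..τ,
          (Matrix.trace (ρ t * deriv (fun s => matLog (gibbs β (H s))) t)).re)
        + ((-(1 / β) * Real.log (partZ β (H τ))) - (-(1 / β) * Real.log (partZ β (H 0)))) := by
  have hZpos : ∀ t, 0 < partZ β (H t) := fun t => partZ_pos hn β (hHherm t)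
  have hZ : ContDiff ℝ 1 (fun t => partZ β (H t)) :=
    contDiff_partZ β (fun i j => contDiff_entry hH i j)
  have hg : ContDiff ℝ 1 (fun t => Real.log (partZ β (H t))) :=
    hZ.log (fun t => (hZpos t).ne')
  have hfun : (fun s => matLog (gibbs β (H s)))
      = fun s => (-(Real.log (partZ β (H s)))) • (1 : Matrix (Fin n) (Fin n) ℂ)
        + (-β) • H s := funext fun s => matLog_gibbs hn β (hHherm s)
  set g : ℝ → ℝ := fun t => Real.log (partZ β (H t)) with hgdef
  have hDeriv : ∀ t, deriv (fun s => matLog (gibbs β (H s))) t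
      = (-(deriv g t)) • (1 : Matrix (Fin n) (Fin n) ℂ) + (-β) • deriv H t := by
    intro t
    rw [hfun]
    have h1 : HasDerivAt g (deriv g t) t := (hg.differentiable one_ne_zero t).hasDerivAt
    have h2 : HasDerivAt H (deriv H t) t := (hH.differentiable one_ne_zero t).hasDerivAt
    exact ((h1.neg.smul_const (1 : Matrix (Fin n) (Fin n) ℂ)).add (h2.const_smul (-β))).deriv
  have htrace : ∀ t, (Matrix.trace (ρ t * deriv (fun s => matLog (gibbs β (H s))) t)).re
      = -β * (Matrix.trace (ρ t * deriv H t)).re - deriv g t := by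
    intro t
    rw [hDeriv t, mul_add, Matrix.trace_add, Matrix.mul_smul, Matrix.mul_smul, mul_one,
      Matrix.trace_smul, Matrix.trace_smul, (hρ t).2]
    simp [Complex.add_re, Complex.smul_re]
    ring
  have hfc : Continuous fun t => (Matrix.trace (ρ t * deriv H t)).re := by
    have hd : Continuous (deriv H) := hH.continuous_deriv le_rfl
    exact Complex.continuous_re.comp ((hρc.matrix_mul hd).matrix_trace)
  have hGc : Continuous (deriv g) := hg.continuous_deriv le_rfl
  have hI1 : IntervalIntegrable (fun t => (Matrix.trace (ρ t * deriv H t)).re)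
      MeasureTheory.volume 0 τ := hfc.intervalIntegrable 0 τ
  have hI2 : IntervalIntegrable (deriv g) MeasureTheory.volume 0 τ :=
    hGc.intervalIntegrable 0 τ
  have hFTC : ∫ t in (0:ℝ)..τ, deriv g t = g τ - g 0 :=
    intervalIntegral.integral_deriv_eq_sub (fun x _ => hg.differentiable one_ne_zero x) hI2
  rw [intervalIntegral.integral_congr (g := fun t =>
      -β * (Matrix.trace (ρ t * deriv H t)).re - deriv g t) (fun x _ => htrace x)]
  rw [intervalIntegral.integral_sub (hI1.const_mul (-β)) hI2,
    intervalIntegral.integral_const_mul, hFTC]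
  have hβ' : β ≠ 0 := hβ.ne'
  field_simp
  ring
end

section
/- (Theorem 1: partition of work.) Let β > 0, let H : ℝ → Matrix n n ℂ be a continuously differentiable family of Hermitian matrices, and let ρ : ℝ → Matrix n n ℂ be a continuously differentiable family of positive definite density matrices. For t ∈ ℝ, set Z_t = Re tr(exp(−β·H_t)), ρ^β_t = exp(−β·H_t)/Z_t, F^β_t = −(1/β)·Real.log Z_t, and I(t) = S(ρ_t‖ρ^β_t). For τ ≥ 0 define the work ΔW = ∫₀^τ Re tr(ρ_t · H'_t) dt, the heat ΔQ = ∫₀^τ Re tr(ρ'_t · H_t) dt, the entropy change ΔS = S(ρ_τ) − S(ρ_0), the entropy production Δ_iS = ΔS − β·ΔQ, ΔI = I(τ) − I(0), and ΔF^β = F^β_τ − F^β_0. Then ΔW = (1/β)·Δ_iS + (1/β)·ΔI + ΔF^β; that is, the work partitions as ΔW = ΔW_irr + ΔW_rev with irreversible work ΔW_irr = (1/β)·Δ_iS and reversible work ΔW_rev = (1/β)·ΔI + ΔF^β. -/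
open scoped ComplexOrder

section auxcfc
open scoped Matrix.Norms.L2Operator

variable {n : ℕ}

lemma trace_cfc_aux (A : Matrix (Fin n) (Fin n) ℂ) (hA : A.IsHermitian) (f : ℝ → ℝ) :
    Matrix.trace (cfc f A) = ∑ i, (f (hA.eigenvalues i) : ℂ) := by
  rw [hA.cfc_eq, Matrix.IsHermitian.cfc, Unitary.conjStarAlgAut_apply, Matrix.trace_mul_cycle,
    Unitary.star_mul_self_of_mem (SetLike.coe_mem _), one_mul, Matrix.trace_diagonal]
  rfl

lemma exp_eq_cfc_exp (A : Matrix (Fin n) (Fin n) ℂ) (hA : A.IsHermitian) :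
    NormedSpace.exp A = cfc Real.exp A := by
  have hsa : IsSelfAdjoint A := hA
  rw [CFC.real_exp_eq_normedSpace_exp hsa]

lemma trace_exp_pos (hn : 0 < n) (A : Matrix (Fin n) (Fin n) ℂ) (hA : A.IsHermitian) :
    0 < (Matrix.trace (NormedSpace.exp A)).re := by
  rw [exp_eq_cfc_exp A hA, trace_cfc_aux A hA Real.exp]
  have : ((∑ i, ((Real.exp (hA.eigenvalues i) : ℝ) : ℂ)).re) = ∑ i, Real.exp (hA.eigenvalues i) := by
    push_cast [Complex.re_sum]
    rfl
  rw [this]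
  have : Nonempty (Fin n) := ⟨⟨0, hn⟩⟩
  exact Finset.sum_pos (fun i _ => Real.exp_pos _) Finset.univ_nonempty

lemma log_gibbs_aux (hn : 0 < n) (A : Matrix (Fin n) (Fin n) ℂ) (hA : A.IsHermitian) :
    cfc Real.log (((Matrix.trace (NormedSpace.exp A)).re)⁻¹ • NormedSpace.exp A) =
      A + (-Real.log ((Matrix.trace (NormedSpace.exp A)).re)) • (1 : Matrix (Fin n) (Fin n) ℂ) := by
  have hsa : IsSelfAdjoint A := hA
  have hZ : 0 < (Matrix.trace (NormedSpace.exp A)).re := trace_exp_pos hn A hA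
  have hexp : NormedSpace.exp A = NormedSpace.exp A := rfl
  have hesa : IsSelfAdjoint (NormedSpace.exp A) := by
    rw [exp_eq_cfc_exp A hA]; exact cfc_predicate _ _
  have hspec : ∀ x ∈ spectrum ℝ (NormedSpace.exp A), 0 < x := by
    rw [exp_eq_cfc_exp A hA, cfc_map_spectrum Real.exp A]
    rintro - ⟨x, -, rfl⟩
    exact Real.exp_pos x
  have := CFC.log_smul (r := ((Matrix.trace (NormedSpace.exp A)).re)⁻¹)
    (NormedSpace.exp A) (fun x hx => (hspec x hx).ne') (inv_pos.mpr hZ).ne' hesa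
  rw [CFC.log] at this
  rw [this, Real.log_inv, CFC.log_exp A hsa, Algebra.algebraMap_eq_smul_one, add_comm]

end auxcfc

attribute [local instance] Matrix.normedAddCommGroup Matrix.normedSpace

section auxcalc

variable {n : ℕ}

/-- entry evaluation as a continuous ℝ-linear map -/
noncomputable def entryCLM (i j : Fin n) : Matrix (Fin n) (Fin n) ℂ →L[ℝ] ℂ :=
  LinearMap.toContinuousLinearMap
    { toFun := fun A => A i j
      map_add' := fun _ _ => rfl
      map_smul' := fun _ _ => rfl }

lemma entry_hasDerivAt {ρ : ℝ → Matrix (Fin n) (Fin n) ℂ} {ρ' : Matrix (Fin n) (Fin n) ℂ}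
    {t : ℝ} (h : HasDerivAt ρ ρ' t) (i j : Fin n) :
    HasDerivAt (fun s => ρ s i j) (ρ' i j) t :=
  (entryCLM i j).hasFDerivAt.comp_hasDerivAt t h

lemma trace_mul_eq_sum (A B : Matrix (Fin n) (Fin n) ℂ) :
    Matrix.trace (A * B) = ∑ i, ∑ j, A i j * B j i := by
  simp [Matrix.trace, Matrix.diag, Matrix.mul_apply]

lemma trace_hasDerivAt (H ρ : ℝ → Matrix (Fin n) (Fin n) ℂ)
    (hH : ContDiff ℝ 1 H) (hρ : ContDiff ℝ 1 ρ) (t : ℝ) :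
    HasDerivAt (fun s => Matrix.trace (ρ s * H s))
      (Matrix.trace (deriv ρ t * H t) + Matrix.trace (ρ t * deriv H t)) t := by
  have hρ' : HasDerivAt ρ (deriv ρ t) t := (hρ.differentiable one_ne_zero t).hasDerivAt
  have hH' : HasDerivAt H (deriv H t) t := (hH.differentiable one_ne_zero t).hasDerivAt
  have key : HasDerivAt (fun s => ∑ i, ∑ j, ρ s i j * H s j i)
      (∑ i : Fin n, ∑ j : Fin n, (deriv ρ t i j * H t j i + ρ t i j * deriv H t j i)) t := by
    apply HasDerivAt.fun_sum
    intro i _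
    apply HasDerivAt.fun_sum
    intro j _
    exact (entry_hasDerivAt hρ' i j).mul (entry_hasDerivAt hH' j i)
  have : (∑ i : Fin n, ∑ j : Fin n, (deriv ρ t i j * H t j i + ρ t i j * deriv H t j i))
      = Matrix.trace (deriv ρ t * H t) + Matrix.trace (ρ t * deriv H t) := by
    rw [trace_mul_eq_sum, trace_mul_eq_sum, ← Finset.sum_add_distrib]
    congr 1; ext i; rw [← Finset.sum_add_distrib]
  rw [← this]
  convert key using 2
  exact trace_mul_eq_sum _ _

lemma cont_trace_mul {f g : ℝ → Matrix (Fin n) (Fin n) ℂ} (hf : Continuous f)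
    (hg : Continuous g) : Continuous fun t => (Matrix.trace (f t * g t)).re := by
  apply Complex.continuous_re.comp
  exact Continuous.matrix_trace (hf.matrix_mul hg)

lemma ftc_aux (H ρ : ℝ → Matrix (Fin n) (Fin n) ℂ)
    (hH : ContDiff ℝ 1 H) (hρ : ContDiff ℝ 1 ρ) (τ : ℝ) :
    (∫ t in (0:ℝ)..τ, (Matrix.trace (ρ t * deriv H t)).re)
      + (∫ t in (0:ℝ)..τ, (Matrix.trace (deriv ρ t * H t)).re)
    = (Matrix.trace (ρ τ * H τ)).re - (Matrix.trace (ρ 0 * H 0)).re := by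
  have hcρ : Continuous ρ := hρ.continuous
  have hcH : Continuous H := hH.continuous
  have hcρ' : Continuous (deriv ρ) := hρ.continuous_deriv le_rfl
  have hcH' : Continuous (deriv H) := hH.continuous_deriv le_rfl
  have h1 : Continuous fun t => (Matrix.trace (ρ t * deriv H t)).re := cont_trace_mul hcρ hcH'
  have h2 : Continuous fun t => (Matrix.trace (deriv ρ t * H t)).re := cont_trace_mul hcρ' hcH
  rw [← intervalIntegral.integral_add (h1.intervalIntegrable _ _) (h2.intervalIntegrable _ _)]
  have := intervalIntegral.integral_eq_sub_of_hasDerivAt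
    (f := fun t => (Matrix.trace (ρ t * H t)).re)
    (f' := fun t => (Matrix.trace (ρ t * deriv H t)).re + (Matrix.trace (deriv ρ t * H t)).re)
    (a := (0:ℝ)) (b := τ)
    (fun t _ => by
      have := (Complex.reCLM.hasFDerivAt.comp_hasDerivAt t (trace_hasDerivAt H ρ hH hρ t))
      simpa [add_comm, Function.comp_def] using this)
    ((h1.add h2).intervalIntegrable _ _)
  rw [this]

lemma relEntropy_gibbs (hn : 0 < n) (β : ℝ) (Hm ρm : Matrix (Fin n) (Fin n) ℂ)
    (hH : Hm.IsHermitian) (hA : ((-β) • Hm).IsHermitian) (htr : Matrix.trace ρm = 1) :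
    relEntropy ρm (gibbs β Hm)
      = -vnEntropy ρm + β * (Matrix.trace (ρm * Hm)).re + Real.log (partZ β Hm) := by
  have hlog : matLog (gibbs β Hm)
      = (-β) • Hm + (-Real.log (partZ β Hm)) • (1 : Matrix (Fin n) (Fin n) ℂ) := by
    simpa only [matLog, gibbs, partZ, matExp] using log_gibbs_aux hn ((-β) • Hm) hA
  rw [relEntropy, vnEntropy, hlog]
  have hmul : ρm * ((-β) • Hm + (-Real.log (partZ β Hm)) • (1 : Matrix (Fin n) (Fin n) ℂ))
      = (-β) • (ρm * Hm) + (-Real.log (partZ β Hm)) • ρm := by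
    rw [mul_add, mul_smul_comm, mul_smul_comm, mul_one]
  rw [hmul, Matrix.trace_add, Matrix.trace_smul, Matrix.trace_smul, htr]
  simp [Complex.smul_re]
  ring

end auxcalc

/-- **Theorem 1: partition of work into reversible and irreversible parts.**
For `β > 0`, a continuously differentiable family of Hermitian Hamiltonians `H`, and a
continuously differentiable family of positive definite density matrices `ρ`, with
work `ΔW = ∫₀^τ Re tr(ρ_t H'_t) dt`, heat `ΔQ = ∫₀^τ Re tr(ρ'_t H_t) dt`, entropy
production `ΔiS = (S(ρ_τ) − S(ρ_0)) − β·ΔQ`, `ΔI = S(ρ_τ‖ρ^β_τ) − S(ρ_0‖ρ^β_0)` and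
`ΔF^β = F^β_τ − F^β_0`, the work partitions as
`ΔW = (1/β)·ΔiS + (1/β)·ΔI + ΔF^β = ΔW_irr + ΔW_rev`. -/
theorem work_partition_reversible_irreversible {n : ℕ} (hn : 0 < n)
    (β : ℝ) (hβ : 0 < β) (H ρ : ℝ → Matrix (Fin n) (Fin n) ℂ)
    (hH : ContDiff ℝ 1 H) (hHherm : ∀ t, (H t).IsHermitian)
    (hρ : ContDiff ℝ 1 ρ)
    (hρpos : ∀ t, (ρ t).PosDef) (hρtr : ∀ t, Matrix.trace (ρ t) = 1)
    (τ : ℝ) (hτ : 0 ≤ τ)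
    (ΔW ΔQ ΔiS ΔI ΔFβ : ℝ)
    (hW : ΔW = ∫ t in (0:ℝ)..τ, (Matrix.trace (ρ t * deriv H t)).re)
    (hQ : ΔQ = ∫ t in (0:ℝ)..τ, (Matrix.trace (deriv ρ t * H t)).re)
    (hiS : ΔiS = (vnEntropy (ρ τ) - vnEntropy (ρ 0)) - β * ΔQ)
    (hI : ΔI = relEntropy (ρ τ) (gibbs β (H τ)) - relEntropy (ρ 0) (gibbs β (H 0)))
    (hF : ΔFβ = (-(1 / β) * Real.log (partZ β (H τ))) - (-(1 / β) * Real.log (partZ β (H 0)))) :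
    ΔW = (1 / β) * ΔiS + (1 / β) * ΔI + ΔFβ := by
  have hAs : ∀ t, ((-β) • H t).IsHermitian := by
    intro t
    have h := hHherm t
    unfold Matrix.IsHermitian at h ⊢
    rw [Matrix.conjTranspose_smul, h, star_trivial]
  have hRτ := relEntropy_gibbs hn β (H τ) (ρ τ) (hHherm τ) (hAs τ) (hρtr τ)
  have hR0 := relEntropy_gibbs hn β (H 0) (ρ 0) (hHherm 0) (hAs 0) (hρtr 0)
  have hWQ : ΔW + ΔQ = (Matrix.trace (ρ τ * H τ)).re - (Matrix.trace (ρ 0 * H 0)).re := by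
    rw [hW, hQ]; exact ftc_aux H ρ hH hρ τ
  have hβ' : β ≠ 0 := ne_of_gt hβ
  have hW' : ΔW = ((Matrix.trace (ρ τ * H τ)).re - (Matrix.trace (ρ 0 * H 0)).re) - ΔQ := by
    linarith
  rw [hW', hiS, hI, hF, hRτ, hR0]
  field_simp
  ring
end
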